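/- Fix a ≠ 0 and let R satisfy 2(R−1)/R³ = a with R < 1, R ≠ 0, and set r₁ = R². Let C₁ = (16 − 8r₁ + 6ar₁² − a²r₁³)/(4(−2 + ar₁)). Then r₁ is a double root of the quartic q(r) = −16C₁² + 64r + 32C₁r − 16r² − 8aC₁r² + 8ar³ − a²r⁴, i.e., q(r₁) = 0 and q'(r₁) = 0. -/

import Mathlib

def q (a C r : ℝ) : ℝ :=
  -16 * C^2 + 64 * r + 32 * C * r - 16 * r^2 - 8 * a * C * r^2 + 8 * a * r^3 - a^2 * r^4

theorem double_root_r1 (a R : ℝ) (ha : a ≠ 0) (hR0 : R ≠ 0) (hR1 : R < 1)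
    (hRa : 2 * (R - 1) / R^3 = a) :
    let r₁ := R^2
    let C₁ := (16 - 8 * r₁ + 6 * a * r₁^2 - a^2 * r₁^3) / (4 * (-2 + a * r₁))
    q a C₁ r₁ = 0 ∧ deriv (q a C₁) r₁ = 0 := by
  intro r₁ C₁
  have hR3 : R ^ 3 ≠ 0 := pow_ne_zero _ hR0
  have ha3 : a * R ^ 3 = 2 * R - 2 := by
    field_simp at hRa
    linear_combination -hRa
  have hden : -2 + a * r₁ ≠ 0 := by
    intro h
    have h2 : (-2 + a * R ^ 2) * R = -2 := by linear_combination ha3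
    rw [show r₁ = R ^ 2 from rfl] at h
    rw [h, zero_mul] at h2
    norm_num at h2
  have hden4 : (4 : ℝ) * (-2 + a * r₁) ≠ 0 := mul_ne_zero (by norm_num) hden
  have hC : C₁ = (R ^ 2 - 3 * R) / 2 := by
    show (16 - 8 * r₁ + 6 * a * r₁ ^ 2 - a ^ 2 * r₁ ^ 3) / (4 * (-2 + a * r₁)) = _
    rw [div_eq_div_iff hden4 (by norm_num : (2:ℝ) ≠ 0)]
    show (16 - 8 * R ^ 2 + 6 * a * (R ^ 2) ^ 2 - a ^ 2 * (R ^ 2) ^ 3) * 2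
        = (R ^ 2 - 3 * R) * (4 * (-2 + a * R ^ 2))
    linear_combination (2 * (-a * R ^ 3 + 2 * R + 8)) * ha3
  have hD : deriv (q a C₁) = fun r => 64 + 32 * C₁ - 32 * r - 16 * a * C₁ * r
      + 24 * a * r ^ 2 - 4 * a ^ 2 * r ^ 3 := by
    funext r
    unfold q
    simp (disch := fun_prop) [deriv_fun_add, deriv_fun_sub, deriv_fun_mul, deriv_pow_field, mul_comm]
    ring
  constructor
  · rw [hC]
    show -16 * ((R ^ 2 - 3 * R) / 2) ^ 2 + 64 * R ^ 2 + 32 * ((R ^ 2 - 3 * R) / 2) * R ^ 2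
        - 16 * (R ^ 2) ^ 2 - 8 * a * ((R ^ 2 - 3 * R) / 2) * (R ^ 2) ^ 2
        + 8 * a * (R ^ 2) ^ 3 - a ^ 2 * (R ^ 2) ^ 4 = 0
    linear_combination (14 * R ^ 2 + 2 * R ^ 3 - a * R ^ 5) * ha3
  · rw [hD, hC]
    show 64 + 32 * ((R ^ 2 - 3 * R) / 2) - 32 * R ^ 2
        - 16 * a * ((R ^ 2 - 3 * R) / 2) * R ^ 2 + 24 * a * (R ^ 2) ^ 2
        - 4 * a ^ 2 * (R ^ 2) ^ 3 = 0
    linear_combination (32 + 8 * R - 4 * a * R ^ 3) * ha3
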